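/- arXiv:2410.23431 — 2 statements merged into one kernel-verified Lean document; each statement's English description precedes it below -/
import Mathlib

section
/- Let M be a nontrivial graph matroid family with dimensionality d and threshold t. Let G = G₁ ∪ G₂, where G₁ and G₂ are graphs with |V(G₁) ∩ V(G₂)| ≥ t. If G₁ and G₂ are both M-rigid, then so is G. -/
/-!
Common framework: graph matroid families.

A finite simple graph (without isolated vertices) is identified with its edge
set: a finite set of non-diagonal elements of `Sym2 ℕ`.  A graph matroid
family is encoded, following the paper, as a finitary matroid on the edge set
of the countable complete graph on `ℕ` that is invariant under all
permutations of `ℕ`.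
-/

/-- The set of vertices covered by a set of edges. -/
def eSupp (E : Set (Sym2 ℕ)) : Set ℕ := {v : ℕ | ∃ e ∈ E, v ∈ e}

/-- The edge set of the complete graph on the vertex set `V`. -/
def clique (V : Set ℕ) : Set (Sym2 ℕ) := {e : Sym2 ℕ | ¬ e.IsDiag ∧ ∀ v ∈ e, v ∈ V}

/-- The edge set of the complete graph `K_n` on the vertices `0, …, n-1`. -/
def cliqueN (n : ℕ) : Set (Sym2 ℕ) := clique {v : ℕ | v < n}

/-- `E` is (the edge set of) a finite simple graph. -/
def IsGraph (E : Set (Sym2 ℕ)) : Prop := E.Finite ∧ ∀ e ∈ E, ¬ e.IsDiag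

/-- The degree of the vertex `v` in the edge set `E`. -/
noncomputable def deg (E : Set (Sym2 ℕ)) (v : ℕ) : ℕ := {e ∈ E | v ∈ e}.ncard

/-- The minimum degree of (the graph with) edge set `E` (whose vertex set is `eSupp E`). -/
noncomputable def minDeg (E : Set (Sym2 ℕ)) : ℕ := sInf {k : ℕ | ∃ v ∈ eSupp E, deg E v = k}

/-- Deleting a set `S` of vertices from the graph with edge set `E`. -/
def deleteVerts (E : Set (Sym2 ℕ)) (S : Set ℕ) : Set (Sym2 ℕ) := {e ∈ E | ∀ v ∈ e, v ∉ S}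

/-- The graph with edge set `E` is `k`-connected: it has more than `k` vertices and
deleting any set of fewer than `k` vertices leaves a connected graph. -/
def KConnected (k : ℕ) (E : Set (Sym2 ℕ)) : Prop :=
  k < (eSupp E).ncard ∧
  ∀ S : Finset ℕ, S.card < k →
    ((SimpleGraph.fromEdgeSet E).induce (eSupp E \ ↑S)).Connected

/-- `E` is a forest. -/
def IsForest (E : Set (Sym2 ℕ)) : Prop := (SimpleGraph.fromEdgeSet E).IsAcyclic

/-- `E` is a matching: no two distinct edges of `E` share a vertex. -/
def IsMatching (E : Set (Sym2 ℕ)) : Prop :=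
  ∀ e ∈ E, ∀ f ∈ E, e ≠ f → ∀ v : ℕ, v ∈ e → v ∉ f

/-- `E` is a star `K_{1,m}` with `m` edges. -/
def IsStar (m : ℕ) (E : Set (Sym2 ℕ)) : Prop :=
  ∃ (c : ℕ) (L : Finset ℕ), c ∉ L ∧ L.card = m ∧ E = (fun x => s(c, x)) '' ↑L

/-- `C` is a cycle graph `C_n` for some `n ≥ 3`. -/
def IsCycleGraph (C : Set (Sym2 ℕ)) : Prop :=
  ∃ n : ℕ, 3 ≤ n ∧ ∃ f : ZMod n → ℕ, Function.Injective f ∧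
    C = {e : Sym2 ℕ | ∃ i : ZMod n, e = s(f i, f (i + 1))}

/-- The rank of the set `X` in the matroid `M₀`: the supremum of the cardinalities of
independent subsets of `X` (as a natural number; all sets we use are finite). -/
noncomputable def mrk (M₀ : Matroid (Sym2 ℕ)) (X : Set (Sym2 ℕ)) : ℕ :=
  sSup {n : ℕ | ∃ I ⊆ X, M₀.Indep I ∧ I.ncard = n}

/-- A vertical `k`-separation of the matroid `M₀`. -/
def VerticalSep (M₀ : Matroid (Sym2 ℕ)) (k : ℕ) (E₁ E₂ : Set (Sym2 ℕ)) : Prop :=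
  Disjoint E₁ E₂ ∧ E₁ ∪ E₂ = M₀.E ∧
  k ≤ mrk M₀ E₁ ∧ k ≤ mrk M₀ E₂ ∧
  mrk M₀ E₁ + mrk M₀ E₂ + 1 ≤ mrk M₀ M₀.E + k

/-- The matroid `M₀` is vertically `k`-connected. -/
def VerticallyConnected (M₀ : Matroid (Sym2 ℕ)) (k : ℕ) : Prop :=
  k ≤ mrk M₀ M₀.E ∧
  ∀ k' : ℕ, 0 < k' → k' < k → ∀ E₁ E₂ : Set (Sym2 ℕ), ¬ VerticalSep M₀ k' E₁ E₂

/-- A `d`-dimensional abstract rigidity matroid on the complete graph with vertex set `V`. -/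
def IsARM (d : ℕ) (V : Set ℕ) (M₀ : Matroid (Sym2 ℕ)) : Prop :=
  M₀.E = clique V ∧
  (∀ E₁ E₂ : Set (Sym2 ℕ), E₁ ⊆ clique V → E₂ ⊆ clique V →
      (eSupp E₁ ∩ eSupp E₂).ncard < d →
      M₀.closure (E₁ ∪ E₂) = M₀.closure E₁ ∪ M₀.closure E₂) ∧
  (∀ E₁ E₂ : Set (Sym2 ℕ), E₁ ⊆ clique V → E₂ ⊆ clique V →
      d ≤ (eSupp E₁ ∩ eSupp E₂).ncard →
      M₀.closure E₁ = clique (eSupp E₁) → M₀.closure E₂ = clique (eSupp E₂) →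
      M₀.closure (E₁ ∪ E₂) = clique (eSupp E₁ ∪ eSupp E₂))

/-- The `d`-dimensional edge split operation: replace an edge `uv` of `G` by a new
vertex `w` joined to `u` and `v`, as well as to `d - 1` other vertices of `G`. -/
def EdgeSplit (d : ℕ) (G G' : Set (Sym2 ℕ)) : Prop :=
  ∃ (u v w : ℕ) (X : Finset ℕ),
    s(u, v) ∈ G ∧ w ∉ eSupp G ∧ ↑X ⊆ eSupp G ∧ X.card = d - 1 ∧ u ∉ X ∧ v ∉ X ∧
    G' = (G \ {s(u, v)}) ∪ {s(w, u), s(w, v)} ∪ ((fun x => s(w, x)) '' ↑X)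

/-- A graph matroid family: a finitary matroid on the edge set of the countable
complete graph on `ℕ`, invariant under all permutations of `ℕ`. -/
structure GraphMatroidFamily where
  /-- The underlying matroid on the edge set of `K_ℕ`. -/
  M : Matroid (Sym2 ℕ)
  ground_eq : M.E = {e : Sym2 ℕ | ¬ e.IsDiag}
  finitary : M.Finitary
  invariant : ∀ σ : Equiv.Perm ℕ, ∀ I : Set (Sym2 ℕ),
    M.Indep I → M.Indep (Sym2.map σ '' I)

namespace GraphMatroidFamily

variable (M : GraphMatroidFamily)

/-- The rank function of the family: `M.rk E` is the rank of the matroid `M(G)` for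
any graph `G` whose edge set contains `E`. -/
noncomputable def rk (E : Set (Sym2 ℕ)) : ℕ := mrk M.M E

/-- A set of edges (a graph) is `M`-independent. -/
def Indep (E : Set (Sym2 ℕ)) : Prop := M.M.Indep E

/-- `C` is an `M`-circuit: a graph that is not `M`-independent, but such that deleting
any single edge from it yields an `M`-independent graph. -/
def IsCircuit (C : Set (Sym2 ℕ)) : Prop :=
  IsGraph C ∧ ¬ M.Indep C ∧ ∀ e ∈ C, M.Indep (C \ {e})

/-- The graph with edge set `E` is `M`-rigid. -/
def Rigid (E : Set (Sym2 ℕ)) : Prop := M.rk E = M.rk (clique (eSupp E))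

/-- The graph with vertex set `V` and edge set `E` is `M`-rigid. -/
def RigidOn (V : Set ℕ) (E : Set (Sym2 ℕ)) : Prop := M.rk E = M.rk (clique V)

/-- `M` is trivial if every (finite, simple) graph is `M`-independent. -/
def Trivial : Prop := ∀ E : Set (Sym2 ℕ), IsGraph E → M.Indep E

/-- `M` is unbounded: the sequence `r(K_n)` is unbounded. -/
def Unbounded : Prop := ∀ B : ℕ, ∃ n : ℕ, B < M.rk (cliqueN n)

/-- `M` is bounded: the sequence `r(K_n)` is bounded. -/
def Bounded : Prop := ∃ B : ℕ, ∀ n : ℕ, M.rk (cliqueN n) ≤ B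

/-- For a bounded family, `m` is the rank `r(M)` of `M`: the maximum (limit) of the
monotone sequence `r(K_n)`. -/
def HasRank (m : ℕ) : Prop :=
  (∀ n : ℕ, M.rk (cliqueN n) ≤ m) ∧ ∃ n : ℕ, M.rk (cliqueN n) = m

/-- `d` is the dimensionality of (the nontrivial family) `M`: the least `d` such that
there is an `M`-circuit with minimum degree `d + 1`. -/
def IsDimensionality (d : ℕ) : Prop :=
  IsLeast {d : ℕ | ∃ C, M.IsCircuit C ∧ minDeg C = d + 1} d

/-- `t` is the threshold of (the nontrivial family) `M` with dimensionality `d`: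
the least value of `|V(C)| - 1` over all `M`-circuits `C` with minimum degree `d + 1`. -/
def IsThreshold (d t : ℕ) : Prop :=
  IsLeast {t : ℕ | ∃ C, M.IsCircuit C ∧ minDeg C = d + 1 ∧ (eSupp C).ncard = t + 1} t

/-- `M` has the Lovász–Yemini property. -/
def LovaszYemini : Prop :=
  ∃ c : ℕ, ∀ E : Set (Sym2 ℕ), IsGraph E → KConnected c E → M.Rigid E

/-- `ψ` is an isomorphism between the matroids `M(G)` and `M(H)`. -/
def MatroidIso (G H : Set (Sym2 ℕ)) (ψ : Sym2 ℕ → Sym2 ℕ) : Prop :=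
  Set.BijOn ψ G H ∧ ∀ S ⊆ G, (M.Indep S ↔ M.Indep (ψ '' S))

/-- `G` is `M`-reconstructible: every isomorphism between `M(G)` and `M(H)` (for a graph
`H` without isolated vertices) is induced by a graph isomorphism. -/
def Reconstructible (G : Set (Sym2 ℕ)) : Prop :=
  ∀ H : Set (Sym2 ℕ), IsGraph H → ∀ ψ : Sym2 ℕ → Sym2 ℕ, M.MatroidIso G H ψ →
    ∃ φ : ℕ → ℕ, Set.BijOn φ (eSupp G) (eSupp H) ∧ ∀ e ∈ G, ψ e = Sym2.map φ e

/-- `M` has the Whitney property. -/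
def Whitney : Prop :=
  ∃ c : ℕ, ∀ E : Set (Sym2 ℕ), IsGraph E → KConnected c E → M.Reconstructible E

/-- `M` is the union of the graph matroid families `Ms`. -/
def IsUnionOf {k : ℕ} (Ms : Fin k → GraphMatroidFamily) : Prop :=
  ∀ I : Set (Sym2 ℕ),
    M.Indep I ↔ ∃ Is : Fin k → Set (Sym2 ℕ), (∀ i, (Ms i).Indep (Is i)) ∧ I = ⋃ i, Is i

/-- `M` is a family of `d`-dimensional abstract rigidity matroids. -/
def FamilyOfARM (d : ℕ) : Prop :=
  ∀ n : ℕ, d ≤ n → IsARM d {v : ℕ | v < n} (M.M.restrict (cliqueN n))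

/-- `M` is `1`-extendable: its dimensionality `d` is finite and positive, and the
`d`-dimensional edge split operation preserves `M`-independence. -/
def OneExtendable : Prop :=
  ∃ d : ℕ, 0 < d ∧ M.IsDimensionality d ∧
    ∀ G G' : Set (Sym2 ℕ), IsGraph G → M.Indep G → EdgeSplit d G G' → M.Indep G'

/-- `G` is `k`-vertex-redundantly `M`-rigid. -/
def VertexRedundantlyRigid (k : ℕ) (G : Set (Sym2 ℕ)) : Prop :=
  M.Rigid G ∧ ∀ S : Finset ℕ, ↑S ⊆ eSupp G → S.card ≤ k →
    M.RigidOn (eSupp G \ ↑S) (deleteVerts G ↑S)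

end GraphMatroidFamily

section Helpers

open Set

lemma mem_eSupp {E : Set (Sym2 ℕ)} {v : ℕ} : v ∈ eSupp E ↔ ∃ e ∈ E, v ∈ e := Iff.rfl

lemma mem_clique {V : Set ℕ} {x y : ℕ} :
    s(x, y) ∈ clique V ↔ x ≠ y ∧ x ∈ V ∧ y ∈ V := by
  constructor
  · rintro ⟨hd, hv⟩
    exact ⟨fun h => hd (by simp [h]), hv x (Sym2.mem_mk_left x y), hv y (Sym2.mem_mk_right x y)⟩
  · rintro ⟨hxy, hx, hy⟩
    refine ⟨by simp [hxy], fun v hv => ?_⟩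
    rcases Sym2.mem_iff.mp hv with rfl | rfl <;> assumption

lemma eSupp_finite {E : Set (Sym2 ℕ)} (hE : E.Finite) : (eSupp E).Finite := by
  have h : eSupp E = ⋃ e ∈ E, {v : ℕ | v ∈ e} := by
    ext v; simp [eSupp]
  rw [h]
  refine hE.biUnion fun e _ => ?_
  induction e using Sym2.ind with
  | _ a b =>
    have : {v : ℕ | v ∈ s(a, b)} = {a, b} := by
      ext v; simp [Sym2.mem_iff]
    rw [this]; exact (finite_singleton b).insert a

lemma clique_finite {V : Set ℕ} (hV : V.Finite) : (clique V).Finite := by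
  refine (((hV.prod hV).image (fun p => s(p.1, p.2)))).subset ?_
  rintro e ⟨hd, hv⟩
  induction e using Sym2.ind with
  | _ a b =>
    exact ⟨(a, b), ⟨hv a (Sym2.mem_mk_left a b), hv b (Sym2.mem_mk_right a b)⟩, rfl⟩

lemma clique_mono {V W : Set ℕ} (h : V ⊆ W) : clique V ⊆ clique W :=
  fun _ ⟨hd, hv⟩ => ⟨hd, fun v hve => h (hv v hve)⟩

lemma graph_subset_clique {G : Set (Sym2 ℕ)} (hG : IsGraph G) : G ⊆ clique (eSupp G) :=
  fun e he => ⟨hG.2 e he, fun v hv => ⟨e, he, hv⟩⟩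

lemma eSupp_union (G₁ G₂ : Set (Sym2 ℕ)) : eSupp (G₁ ∪ G₂) = eSupp G₁ ∪ eSupp G₂ := by
  ext v
  constructor
  · rintro ⟨e, he | he, hv⟩
    · exact Or.inl ⟨e, he, hv⟩
    · exact Or.inr ⟨e, he, hv⟩
  · rintro (⟨e, he, hv⟩ | ⟨e, he, hv⟩)
    · exact ⟨e, Or.inl he, hv⟩
    · exact ⟨e, Or.inr he, hv⟩

/-- The rank of a finite set equals the cardinality of any of its bases. -/
lemma mrk_eq_ncard_of_basis {M₀ : Matroid (Sym2 ℕ)} {X I : Set (Sym2 ℕ)}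
    (hX : X.Finite) (hI : M₀.IsBasis I X) : mrk M₀ X = I.ncard := by
  have hub : ∀ n ∈ {n : ℕ | ∃ J ⊆ X, M₀.Indep J ∧ J.ncard = n}, n ≤ I.ncard := by
    rintro n ⟨J, hJX, hJ, rfl⟩
    obtain ⟨I', hI', hJI'⟩ := hJ.subset_isBasis_of_subset hJX hI.subset_ground
    have hcard := hI'.encard_eq_encard hI
    have hI'fin : I'.Finite := hX.subset hI'.subset
    calc J.ncard ≤ I'.ncard := ncard_le_ncard hJI' hI'fin
      _ = I.ncard := by
        rw [← Nat.cast_inj (R := ℕ∞), hI'fin.cast_ncard_eq,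
          (hX.subset hI.subset).cast_ncard_eq]
        exact hcard
  refine le_antisymm (csSup_le ⟨0, ∅, empty_subset _, M₀.empty_indep, by simp⟩ hub) ?_
  exact le_csSup ⟨I.ncard, hub⟩ ⟨I, hI.subset, hI.indep, rfl⟩

lemma mrk_le_of_subset_closure {M₀ : Matroid (Sym2 ℕ)} {X Y : Set (Sym2 ℕ)}
    (hX : X.Finite) (hXE : X ⊆ M₀.E) (hY : Y.Finite) (hYX : Y ⊆ M₀.closure X) :
    mrk M₀ Y ≤ mrk M₀ X := by
  obtain ⟨I, hI⟩ := M₀.exists_isBasis X hXE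
  obtain ⟨J, hJ⟩ := M₀.exists_isBasis Y (hYX.trans (M₀.closure_subset_ground X))
  rw [mrk_eq_ncard_of_basis hX hI, mrk_eq_ncard_of_basis hY hJ]
  have hJcl : J ⊆ M₀.closure I := by
    rw [hI.closure_eq_closure]
    exact hJ.subset.trans hYX
  obtain ⟨J', hJ', hJJ'⟩ := hJ.indep.subset_isBasis_of_subset hJcl
    (M₀.closure_subset_ground I)
  have hIcl : M₀.IsBasis I (M₀.closure I) := hI.indep.isBasis_closure
  have hcard := hJ'.encard_eq_encard hIcl
  have hIfin : I.Finite := hX.subset hI.subset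
  have hJ'fin : J'.Finite := by
    rw [← encard_lt_top_iff] at hIfin ⊢
    rwa [hcard]
  calc J.ncard ≤ J'.ncard := ncard_le_ncard hJJ' hJ'fin
    _ = I.ncard := by
      rw [← Nat.cast_inj (R := ℕ∞), hJ'fin.cast_ncard_eq, hIfin.cast_ncard_eq]
      exact hcard

lemma mrk_mono {M₀ : Matroid (Sym2 ℕ)} {X Y : Set (Sym2 ℕ)}
    (hXY : X ⊆ Y) (hY : Y.Finite) (hYE : Y ⊆ M₀.E) : mrk M₀ X ≤ mrk M₀ Y :=
  mrk_le_of_subset_closure hY hYE (hY.subset hXY)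
    (hXY.trans (M₀.subset_closure Y hYE))

lemma subset_closure_of_mrk_eq {M₀ : Matroid (Sym2 ℕ)} {X Y : Set (Sym2 ℕ)}
    (hXY : X ⊆ Y) (hY : Y.Finite) (hYE : Y ⊆ M₀.E) (h : mrk M₀ X = mrk M₀ Y) :
    Y ⊆ M₀.closure X := by
  obtain ⟨I, hI⟩ := M₀.exists_isBasis X (hXY.trans hYE)
  obtain ⟨J, hJ, hIJ⟩ := hI.indep.subset_isBasis_of_subset (hI.subset.trans hXY) hYE
  have hJfin : J.Finite := hY.subset hJ.subset
  have hcard : J.ncard ≤ I.ncard := by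
    rw [← mrk_eq_ncard_of_basis (hY.subset hXY) hI, ← mrk_eq_ncard_of_basis hY hJ, h]
  have hIJeq : I = J := Set.eq_of_subset_of_ncard_le hIJ hcard hJfin
  calc Y ⊆ M₀.closure J := hJ.subset_closure
    _ = M₀.closure I := by rw [hIJeq]
    _ ⊆ M₀.closure X := M₀.closure_subset_closure hI.subset

lemma mem_closure_of_circuitlike {M₀ : Matroid (Sym2 ℕ)} {C : Set (Sym2 ℕ)} {e : Sym2 ℕ}
    (hC : ¬ M₀.Indep C) (he : e ∈ C) (heE : e ∈ M₀.E) (hCe : M₀.Indep (C \ {e})) :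
    e ∈ M₀.closure (C \ {e}) := by
  by_contra h
  have h2 := (hCe.notMem_closure_iff heE).mp h
  rw [insert_diff_singleton, insert_eq_of_mem he] at h2
  exact hC h2.1

/-- Any injection on a finite subset of `ℕ` extends to a permutation of `ℕ`. -/
lemma exists_perm_extend {W : Set ℕ} (hW : W.Finite) {f : ℕ → ℕ} (hf : Set.InjOn f W) :
    ∃ σ : Equiv.Perm ℕ, ∀ x ∈ W, σ x = f x := by
  classical
  have h1 : Set.BijOn f W (f '' W) := hf.bijOn_image
  have i1 : Infinite ↥(Wᶜ : Set ℕ) := hW.infinite_compl.to_subtype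
  have i2 : Infinite ↥((f '' W)ᶜ : Set ℕ) := (hW.image f).infinite_compl.to_subtype
  obtain ⟨d1⟩ := nonempty_denumerable ↥(Wᶜ : Set ℕ)
  obtain ⟨d2⟩ := nonempty_denumerable ↥((f '' W)ᶜ : Set ℕ)
  let e₂ : ↥(Wᶜ : Set ℕ) ≃ ↥((f '' W)ᶜ : Set ℕ) :=
    (@Denumerable.eqv _ d1).trans (@Denumerable.eqv _ d2).symm
  refine ⟨(Equiv.Set.sumCompl W).symm.trans
    ((Equiv.sumCongr (Set.BijOn.equiv f h1) e₂).trans (Equiv.Set.sumCompl (f '' W))),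
    fun x hx => ?_⟩
  simp only [Equiv.trans_apply]
  rw [Equiv.Set.sumCompl_symm_apply_of_mem hx]
  rfl

end Helpers

open Set

/-- (Gluing lemma.) Let `M` be a nontrivial graph matroid family with
dimensionality `d` and threshold `t`.  If `G₁` and `G₂` are `M`-rigid graphs with at
least `t` vertices in common, then their union is `M`-rigid. -/
theorem gluing (M : GraphMatroidFamily) (d t : ℕ)
    (hnt : ¬ M.Trivial) (hd : M.IsDimensionality d) (ht : M.IsThreshold d t)
    (G₁ G₂ : Set (Sym2 ℕ)) (h₁ : IsGraph G₁) (h₂ : IsGraph G₂)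
    (hcap : t ≤ (eSupp G₁ ∩ eSupp G₂).ncard)
    (hr₁ : M.Rigid G₁) (hr₂ : M.Rigid G₂) : M.Rigid (G₁ ∪ G₂) := by
  classical
  obtain ⟨C, hCc, hmd, hWcard⟩ := ht.1
  obtain ⟨hCg, hCdep, hCdel⟩ := hCc
  set V₁ := eSupp G₁ with hV₁def
  set V₂ := eSupp G₂ with hV₂def
  set S := V₁ ∩ V₂ with hSdef
  have hV₁fin : V₁.Finite := eSupp_finite h₁.1
  have hV₂fin : V₂.Finite := eSupp_finite h₂.1
  have hSfin : S.Finite := hV₁fin.inter_of_left _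
  have hcliqueE : ∀ V : Set ℕ, clique V ⊆ M.M.E := fun V e he => by
    rw [M.ground_eq]; exact he.1
  have hG₁E : G₁ ⊆ M.M.E := fun e he => by rw [M.ground_eq]; exact h₁.2 e he
  have hG₂E : G₂ ⊆ M.M.E := fun e he => by rw [M.ground_eq]; exact h₂.2 e he
  -- circuit data
  have hCne : C.Nonempty := by
    rcases C.eq_empty_or_nonempty with rfl | h
    · exact absurd M.M.empty_indep hCdep
    · exact h
  obtain ⟨e₀, he₀⟩ := hCne
  revert he₀
  induction e₀ using Sym2.ind with
  | _ u v =>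
  intro he₀
  have huv : u ≠ v := fun h => hCg.2 _ he₀ (by rw [h]; exact Sym2.mk_isDiag_iff.mpr rfl)
  set W := eSupp C with hWdef
  have hWfin : W.Finite := eSupp_finite hCg.1
  have hu : u ∈ W := ⟨s(u, v), he₀, Sym2.mem_mk_left u v⟩
  have hv : v ∈ W := ⟨s(u, v), he₀, Sym2.mem_mk_right u v⟩
  -- the cross-edge claim
  have cross : ∀ x ∈ V₁ \ V₂, ∀ y ∈ V₂ \ V₁,
      s(x, y) ∈ M.M.closure (clique V₁ ∪ clique V₂) := by
    intro x hx y hy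
    have hxS : x ∉ S := fun h => hx.2 h.2
    have hyS : y ∉ S := fun h => hy.2 h.1
    have hxy : x ≠ y := fun h => hy.2 (h ▸ hx.1)
    -- build the injection from `W \ {u, v}` into `S`
    have hW'le : (W \ ({u, v} : Set ℕ)).encard ≤ S.encard := by
      have h1 : (W \ ({u, v} : Set ℕ)).ncard ≤ (W \ ({u} : Set ℕ)).ncard :=
        ncard_le_ncard (diff_subset_diff_right (by simp)) (hWfin.diff)
      have h2 : (W \ ({u} : Set ℕ)).ncard = t := by
        rw [ncard_diff_singleton_of_mem hu, hWcard]
        omega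
      have h3 : (W \ ({u, v} : Set ℕ)).ncard ≤ S.ncard := le_trans (h1.trans_eq h2) hcap
      rw [← (hWfin.diff).cast_ncard_eq, ← hSfin.cast_ncard_eq]
      exact_mod_cast h3
    obtain ⟨g, hgmap, hginj⟩ := (hWfin.diff).exists_injOn_of_encard_le hW'le
    set f : ℕ → ℕ := fun z => if z = u then x else if z = v then y else g z with hfdef
    have hfu : f u = x := by simp [hfdef]
    have hfv : f v = y := by simp [hfdef, huv.symm]
    have hfS : ∀ z ∈ W, z ≠ u → z ≠ v → f z ∈ S := by
      intro z hz hzu hzv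
      simp only [hfdef, if_neg hzu, if_neg hzv]
      exact hgmap ⟨hz, by simp [hzu, hzv]⟩
    have hfinj : Set.InjOn f W := by
      intro a ha b hb hab
      by_cases hau : a = u
      · by_cases hbu : b = u
        · rw [hau, hbu]
        by_cases hbv : b = v
        · rw [hau, hfu, hbv, hfv] at hab; exact absurd hab hxy
        · rw [hau, hfu] at hab
          exact absurd (by rw [hab]; exact hfS b hb hbu hbv) hxS
      by_cases hav : a = v
      · by_cases hbu : b = u
        · rw [hav, hfv, hbu, hfu] at hab; exact absurd hab.symm hxy
        by_cases hbv : b = v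
        · rw [hav, hbv]
        · rw [hav, hfv] at hab
          exact absurd (by rw [hab]; exact hfS b hb hbu hbv) hyS
      by_cases hbu : b = u
      · rw [hbu, hfu] at hab
        exact absurd (by rw [← hab]; exact hfS a ha hau hav) hxS
      by_cases hbv : b = v
      · rw [hbv, hfv] at hab
        exact absurd (by rw [← hab]; exact hfS a ha hau hav) hyS
      · refine hginj ⟨ha, by simp [hau, hav]⟩ ⟨hb, by simp [hbu, hbv]⟩ ?_
        simpa [hfdef, if_neg hau, if_neg hav, if_neg hbu, if_neg hbv] using hab
    obtain ⟨σ, hσ⟩ := exists_perm_extend hWfin hfinj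
    have hσu : σ u = x := (hσ u hu).trans hfu
    have hσv : σ v = y := (hσ v hv).trans hfv
    have hσS : ∀ z ∈ W, z ≠ u → z ≠ v → σ z ∈ S := by
      intro z hz h1 h2; rw [hσ z hz]; exact hfS z hz h1 h2
    have hmapinj : Function.Injective (Sym2.map (σ : ℕ → ℕ)) :=
      Sym2.map.injective σ.injective
    have hC'dep : ¬ M.M.Indep (Sym2.map (σ : ℕ → ℕ) '' C) := by
      intro h
      have h2 := M.invariant σ⁻¹ _ h
      rw [← image_comp, ← Sym2.map_comp] at h2
      have hcomp : ((σ⁻¹ : Equiv.Perm ℕ) : ℕ → ℕ) ∘ (σ : ℕ → ℕ) = id := by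
        funext z; simp
      rw [hcomp, Sym2.map_id, image_id] at h2
      exact hCdep h2
    have he₀map : Sym2.map (σ : ℕ → ℕ) s(u, v) = s(x, y) := by
      rw [Sym2.map_pair_eq, hσu, hσv]
    have hdel : M.M.Indep ((Sym2.map (σ : ℕ → ℕ) '' C) \ {s(x, y)}) := by
      have h4 := M.invariant σ _ (hCdel _ he₀)
      rwa [image_diff hmapinj, image_singleton, he₀map] at h4
    have hxyE : s(x, y) ∈ M.M.E := by
      rw [M.ground_eq]; simpa [Sym2.mk_isDiag_iff] using hxy
    have hmem : s(x, y) ∈ Sym2.map (σ : ℕ → ℕ) '' C := ⟨s(u, v), he₀, he₀map⟩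
    have hclosure := mem_closure_of_circuitlike hC'dep hmem hxyE hdel
    have hsub : (Sym2.map (σ : ℕ → ℕ) '' C) \ {s(x, y)} ⊆ clique V₁ ∪ clique V₂ := by
      have hEq : (Sym2.map (σ : ℕ → ℕ) '' C) \ {s(x, y)} =
          Sym2.map (σ : ℕ → ℕ) '' (C \ {s(u, v)}) := by
        rw [image_diff hmapinj, image_singleton, he₀map]
      rw [hEq]
      have haux : ∀ a b : ℕ, s(a, b) ∈ C → s(a, b) ≠ s(u, v) →
          Sym2.map (σ : ℕ → ℕ) s(a, b) ∈ clique V₁ ∪ clique V₂ := by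
        intro a b haC hne
        have haW : a ∈ W := ⟨_, haC, Sym2.mem_mk_left a b⟩
        have hbW : b ∈ W := ⟨_, haC, Sym2.mem_mk_right a b⟩
        have hab : a ≠ b := fun h =>
          hCg.2 _ haC (by rw [h]; exact Sym2.mk_isDiag_iff.mpr rfl)
        have hσab : σ a ≠ σ b := fun h => hab (σ.injective h)
        rw [Sym2.map_pair_eq]
        have hS₁ : S ⊆ V₁ := inter_subset_left
        have hS₂ : S ⊆ V₂ := inter_subset_right
        by_cases hau : a = u
        · by_cases hbv : b = v
          · exact absurd (by rw [hau, hbv]) hne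
          have hbu : b ≠ u := fun h => hab (hau.trans h.symm)
          have hbS : σ b ∈ S := hσS b hbW hbu hbv
          rw [hau, hσu]
          exact Or.inl (mem_clique.mpr ⟨fun h => hxS (h ▸ hbS), hx.1, hS₁ hbS⟩)
        by_cases hav : a = v
        · by_cases hbu : b = u
          · exact absurd (by rw [hav, hbu]; exact Sym2.eq_swap) hne
          have hbv : b ≠ v := fun h => hab (hav.trans h.symm)
          have hbS : σ b ∈ S := hσS b hbW hbu hbv
          rw [hav, hσv]
          exact Or.inr (mem_clique.mpr ⟨fun h => hyS (h ▸ hbS), hy.1, hS₂ hbS⟩)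
        have haS : σ a ∈ S := hσS a haW hau hav
        by_cases hbu : b = u
        · rw [hbu, hσu]
          exact Or.inl (mem_clique.mpr ⟨fun h => hxS (h ▸ haS), hS₁ haS, hx.1⟩)
        by_cases hbv : b = v
        · rw [hbv, hσv]
          exact Or.inr (mem_clique.mpr ⟨fun h => hyS (h ▸ haS), hS₂ haS, hy.1⟩)
        · exact Or.inl (mem_clique.mpr ⟨hσab, hS₁ haS, hS₁ (hσS b hbW hbu hbv)⟩)
      rintro _ ⟨e', ⟨he'C, he'ne⟩, rfl⟩
      revert he'C he'ne
      induction e' using Sym2.ind with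
      | _ a b => exact fun hC hne => haux a b hC (by simpa using hne)
    exact M.M.closure_subset_closure hsub hclosure
  -- cliques are in the closure of the union
  have hcl₁ : clique V₁ ⊆ M.M.closure G₁ :=
    subset_closure_of_mrk_eq (graph_subset_clique h₁) (clique_finite hV₁fin)
      (hcliqueE _) hr₁
  have hcl₂ : clique V₂ ⊆ M.M.closure G₂ :=
    subset_closure_of_mrk_eq (graph_subset_clique h₂) (clique_finite hV₂fin)
      (hcliqueE _) hr₂
  have hU : clique V₁ ∪ clique V₂ ⊆ M.M.closure (G₁ ∪ G₂) :=
    union_subset (hcl₁.trans (M.M.closure_subset_closure subset_union_left))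
      (hcl₂.trans (M.M.closure_subset_closure subset_union_right))
  have hUcl : M.M.closure (clique V₁ ∪ clique V₂) ⊆ M.M.closure (G₁ ∪ G₂) := by
    rw [← M.M.closure_closure (G₁ ∪ G₂)]
    exact M.M.closure_subset_closure hU
  have hK : clique (V₁ ∪ V₂) ⊆ M.M.closure (G₁ ∪ G₂) := by
    have haux2 : ∀ a b : ℕ, s(a, b) ∈ clique (V₁ ∪ V₂) →
        s(a, b) ∈ M.M.closure (G₁ ∪ G₂) := by
      intro a b habK
      obtain ⟨hab, ha, hb⟩ := mem_clique.mp habK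
      rcases ha with ha | ha <;> rcases hb with hb | hb
      · exact hU (Or.inl (mem_clique.mpr ⟨hab, ha, hb⟩))
      · by_cases ha2 : a ∈ V₂
        · exact hU (Or.inr (mem_clique.mpr ⟨hab, ha2, hb⟩))
        by_cases hb1 : b ∈ V₁
        · exact hU (Or.inl (mem_clique.mpr ⟨hab, ha, hb1⟩))
        · exact hUcl (cross a ⟨ha, ha2⟩ b ⟨hb, hb1⟩)
      · by_cases ha1 : a ∈ V₁
        · exact hU (Or.inl (mem_clique.mpr ⟨hab, ha1, hb⟩))
        by_cases hb2 : b ∈ V₂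
        · exact hU (Or.inr (mem_clique.mpr ⟨hab, ha, hb2⟩))
        · rw [Sym2.eq_swap]; exact hUcl (cross b ⟨hb, hb2⟩ a ⟨ha, ha1⟩)
      · exact hU (Or.inr (mem_clique.mpr ⟨hab, ha, hb⟩))
    intro e he
    revert he
    induction e using Sym2.ind with
    | _ a b => exact haux2 a b
  -- conclude
  show mrk M.M (G₁ ∪ G₂) = mrk M.M (clique (eSupp (G₁ ∪ G₂)))
  rw [eSupp_union G₁ G₂]
  have hKfin : (clique (V₁ ∪ V₂)).Finite := clique_finite (hV₁fin.union hV₂fin)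
  have hGsub : G₁ ∪ G₂ ⊆ clique (V₁ ∪ V₂) :=
    union_subset ((graph_subset_clique h₁).trans (clique_mono subset_union_left))
      ((graph_subset_clique h₂).trans (clique_mono subset_union_right))
  refine le_antisymm (mrk_mono hGsub hKfin (hcliqueE _)) ?_
  exact mrk_le_of_subset_closure (h₁.1.union h₂.1) (union_subset hG₁E hG₂E) hKfin hK
end

section
/- Let M be a bounded graph matroid family with rank r(M). Then the graph consisting of r(M) + 1 pairwise disjoint (independent) edges is an M-circuit. -/
section Helpers

lemma exists_perm_extend' (s : Finset ℕ) (g : ℕ → ℕ) (hg : Set.InjOn g ↑s) :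
    ∃ σ : Equiv.Perm ℕ, ∀ x ∈ s, σ x = g x := by
  induction s using Finset.induction_on with
  | empty => exact ⟨1, by simp⟩
  | @insert a s ha ih =>
    obtain ⟨σ, hσ⟩ := ih (hg.mono (by intro x hx; simp [hx]))
    refine ⟨σ * Equiv.swap a (σ.symm (g a)), ?_⟩
    intro x hx
    rcases Finset.mem_insert.1 hx with rfl | hx'
    · simp [Equiv.Perm.mul_apply]
    · have hxa : x ≠ a := by rintro rfl; exact ha hx'
      have hswap : Equiv.swap a (σ.symm (g a)) x = x := by
        apply Equiv.swap_apply_of_ne_of_ne hxa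
        intro hcon
        have h1 : σ x = g a := by rw [hcon]; simp
        rw [hσ x hx'] at h1
        exact hxa (hg (by simp [hx']) (by simp) h1)
      rw [Equiv.Perm.mul_apply, hswap, hσ x hx']

/-- The canonical matching with `k` edges. -/
def cmatch (k : ℕ) : Set (Sym2 ℕ) := (fun i : ℕ => s(2*i, 2*i+1)) '' Set.Iio k

lemma cmatch_matching (k : ℕ) : IsMatching (cmatch k) := by
  rintro e ⟨i, hi, rfl⟩ f ⟨j, hj, rfl⟩ hne v hv1 hv2
  simp only [Sym2.mem_iff] at hv1 hv2
  have hij : i ≠ j := by rintro rfl; exact hne rfl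
  omega

lemma cmatch_nondiag (k : ℕ) : ∀ e ∈ cmatch k, ¬ e.IsDiag := by
  rintro e ⟨i, hi, rfl⟩
  simp [Sym2.mk_isDiag_iff]

lemma cmatch_finite (k : ℕ) : (cmatch k).Finite := (Set.finite_Iio k).image _

lemma cmatch_ncard (k : ℕ) : (cmatch k).ncard = k := by
  rw [cmatch, Set.ncard_image_of_injOn, Set.ncard_eq_toFinset_card']
  · simp
  · intro i _ j _ h
    rw [Sym2.eq_iff] at h
    omega

lemma cmatch_succ (k : ℕ) : cmatch (k+1) = insert s(2*k, 2*k+1) (cmatch k) := by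
  rw [cmatch, cmatch, show Set.Iio (k+1) = insert k (Set.Iio k) by ext; simp,
    Set.image_insert_eq]

/-- Every matching of size `k` is the image of the canonical matching under a permutation. -/
lemma exists_perm_cmatch : ∀ (k : ℕ) (A : Set (Sym2 ℕ)), IsMatching A →
    (∀ e ∈ A, ¬ e.IsDiag) → A.Finite → A.ncard = k →
    ∃ σ : Equiv.Perm ℕ, Sym2.map σ '' cmatch k = A := by
  intro k
  induction k with
  | zero =>
    intro A _ _ hfin hcard
    rw [Set.ncard_eq_zero hfin] at hcard
    refine ⟨1, ?_⟩
    have : Set.Iio 0 = (∅ : Set ℕ) := by ext x; simp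
    simp [cmatch, hcard, this]
  | succ k ih =>
    intro A hM hnd hfin hcard
    obtain ⟨e, he⟩ : A.Nonempty := Set.nonempty_of_ncard_ne_zero (by omega)
    obtain ⟨a, b, rfl⟩ : ∃ a b, e = s(a, b) := by
      induction e using Sym2.ind with
      | _ x y => exact ⟨x, y, rfl⟩
    have hab : a ≠ b := by
      have := hnd _ he; simpa [Sym2.mk_isDiag_iff] using this
    set A' := A \ {s(a, b)} with hA'
    have hM' : IsMatching A' := fun e1 h1 e2 h2 => hM e1 h1.1 e2 h2.1
    have hfin' : A'.Finite := hfin.diff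
    have hcard' : A'.ncard = k := by
      rw [hA', Set.ncard_diff_singleton_of_mem he, hcard]
      omega
    obtain ⟨σ', hσ'⟩ := ih A' hM' (fun e h => hnd e h.1) hfin' hcard'
    -- a and b are not covered by A'
    have hnotmem : ∀ v ∈ s(a, b), ∀ f ∈ A', v ∉ f := by
      intro v hv f hf
      exact hM _ he _ hf.1 (fun h => hf.2 h.symm) v hv
    have hkey : ∀ v ∈ s(a, b), ¬ (σ'.symm v < 2*k) := by
      intro v hv hlt
      set p := σ'.symm v with hp
      have hi : p / 2 < k := by omega
      have hpmem : p ∈ s(2*(p/2), 2*(p/2)+1) := by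
        simp only [Sym2.mem_iff]; omega
      have hedge : s(2*(p/2), 2*(p/2)+1) ∈ cmatch k := ⟨p/2, hi, rfl⟩
      have : Sym2.map σ' s(2*(p/2), 2*(p/2)+1) ∈ A' := hσ' ▸ Set.mem_image_of_mem _ hedge
      have hvmem : v ∈ Sym2.map σ' s(2*(p/2), 2*(p/2)+1) := by
        rw [Sym2.map_pair_eq]
        simp only [Sym2.mem_iff] at hpmem ⊢
        rcases hpmem with h | h
        · left; rw [← h, hp]; simp
        · right; rw [← h, hp]; simp
      exact hnotmem v hv _ this hvmem
    have hpa : ¬ (σ'.symm a < 2*k) := hkey a (by simp)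
    have hpb : ¬ (σ'.symm b < 2*k) := hkey b (by simp)
    have hpq : σ'.symm a ≠ σ'.symm b := fun h => hab (σ'.symm.injective h)
    have hginj : Set.InjOn
        (fun x => if x = 2*k then σ'.symm a else if x = 2*k+1 then σ'.symm b else x)
        ↑(Finset.range (2*k+2)) := by
      intro x hx y hy hxy
      simp only [Finset.coe_range, Set.mem_Iio] at hx hy
      by_contra hne
      simp only at hxy
      split_ifs at hxy with h1 h2 h3 h4 h5 <;> omega
    obtain ⟨τ, hτ⟩ := exists_perm_extend' _ _ hginj
    refine ⟨σ' * τ, ?_⟩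
    have hτval : ∀ x < 2*k, τ x = x := by
      intro x hx
      have h := hτ x (Finset.mem_range.2 (by omega))
      split_ifs at h with h1 h2 <;> first | omega | exact h
    have hτk : τ (2*k) = σ'.symm a := by
      have h := hτ (2*k) (Finset.mem_range.2 (by omega))
      split_ifs at h with h1 h2 <;> first | omega | exact h
    have hτk1 : τ (2*k+1) = σ'.symm b := by
      have h := hτ (2*k+1) (Finset.mem_range.2 (by omega))
      split_ifs at h with h1 h2 <;> first | omega | exact h
    rw [cmatch_succ, Set.image_insert_eq]
    have h1 : Sym2.map (σ' * τ) s(2*k, 2*k+1) = s(a, b) := by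
      rw [Sym2.map_pair_eq]
      simp only [Equiv.Perm.mul_apply, hτk, hτk1]
      simp
    have h2 : Sym2.map (σ' * τ) '' cmatch k = A' := by
      rw [← hσ']
      apply Set.image_congr
      rintro x ⟨i, hi, rfl⟩
      simp only [Set.mem_Iio] at hi
      rw [Sym2.map_pair_eq, Sym2.map_pair_eq]
      simp only [Equiv.Perm.mul_apply]
      rw [hτval (2*i) (by omega), hτval (2*i+1) (by omega)]
    rw [h1, h2, hA', Set.insert_diff_singleton, Set.insert_eq_self.2 he]

/-- Transferring independence between matchings of the same size. -/
lemma indep_transfer (M : GraphMatroidFamily) {A B : Set (Sym2 ℕ)}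
    (hMA : IsMatching A) (hndA : ∀ e ∈ A, ¬ e.IsDiag) (hfinA : A.Finite)
    (hMB : IsMatching B) (hndB : ∀ e ∈ B, ¬ e.IsDiag) (hfinB : B.Finite)
    (hcard : A.ncard = B.ncard) (h : M.Indep A) : M.Indep B := by
  obtain ⟨σA, hσA⟩ := exists_perm_cmatch A.ncard A hMA hndA hfinA rfl
  obtain ⟨σB, hσB⟩ := exists_perm_cmatch A.ncard B hMB hndB hfinB hcard.symm
  have hcmA : Sym2.map ⇑σA.symm '' A = cmatch A.ncard := by
    nth_rewrite 1 [← hσA]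
    rw [Set.image_image]
    have hpt : ∀ x ∈ cmatch A.ncard, Sym2.map ⇑σA.symm (Sym2.map ⇑σA x) = x := by
      intro x _
      induction x using Sym2.ind with
      | _ u v => rw [Sym2.map_pair_eq, Sym2.map_pair_eq]; simp
    rw [Set.image_congr hpt, Set.image_id']
  have h1 : M.Indep (cmatch A.ncard) := by
    rw [← hcmA]; exact M.invariant σA.symm A h
  have h2 := M.invariant σB _ h1
  rwa [hσB] at h2

lemma cliqueN_finite (n : ℕ) : (cliqueN n).Finite := by
  refine Set.Finite.subset (((Set.finite_Iio n).prod (Set.finite_Iio n)).image (fun p : ℕ × ℕ => s(p.1, p.2))) ?_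
  rintro e ⟨hnd, hmem⟩
  induction e using Sym2.ind with
  | _ x y =>
    exact ⟨(x, y), ⟨hmem x (by simp), hmem y (by simp)⟩, rfl⟩

lemma mrk_bddAbove (M₀ : Matroid (Sym2 ℕ)) (X : Set (Sym2 ℕ)) (hX : X.Finite) :
    BddAbove {n : ℕ | ∃ I ⊆ X, M₀.Indep I ∧ I.ncard = n} := by
  refine ⟨X.ncard, ?_⟩
  rintro n ⟨I, hI, _, rfl⟩
  exact Set.ncard_le_ncard hI hX

lemma mrk_exists_indep (M₀ : Matroid (Sym2 ℕ)) (n : ℕ) :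
    ∃ I ⊆ cliqueN n, M₀.Indep I ∧ I.ncard = mrk M₀ (cliqueN n) := by
  have hne : {j : ℕ | ∃ I ⊆ cliqueN n, M₀.Indep I ∧ I.ncard = j}.Nonempty :=
    ⟨0, ∅, Set.empty_subset _, M₀.empty_indep, Set.ncard_empty _⟩
  have := Nat.sSup_mem hne (mrk_bddAbove M₀ _ (cliqueN_finite n))
  exact this

lemma le_mrk (M₀ : Matroid (Sym2 ℕ)) (n : ℕ) (I : Set (Sym2 ℕ)) (hI : I ⊆ cliqueN n)
    (hind : M₀.Indep I) : I.ncard ≤ mrk M₀ (cliqueN n) :=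
  le_csSup (mrk_bddAbove M₀ _ (cliqueN_finite n)) ⟨I, hI, hind, rfl⟩

lemma cmatch_subset_cliqueN (k : ℕ) : cmatch k ⊆ cliqueN (2*k) := by
  rintro e ⟨i, hi, rfl⟩
  simp only [Set.mem_Iio] at hi
  refine ⟨by simp [Sym2.mk_isDiag_iff], ?_⟩
  intro v hv
  simp only [Sym2.mem_iff] at hv
  simp only [Set.mem_setOf_eq]
  omega

end Helpers

lemma encard_eq_ncard' {s : Set (Sym2 ℕ)} (h : s.Finite) : s.encard = (s.ncard : ℕ∞) := by
  rw [h.encard_eq_coe_toFinset_card, Set.ncard_eq_toFinset_card _ h]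

lemma cmatch_indep (M : GraphMatroidFamily) (m : ℕ) (hm : M.HasRank m) :
    ∀ k, k ≤ m → M.Indep (cmatch k) := by
  intro k
  induction k with
  | zero =>
    intro _
    have h0 : cmatch 0 = ∅ := by
      have : Set.Iio 0 = (∅ : Set ℕ) := by ext x; simp
      simp [cmatch, this]
    rw [GraphMatroidFamily.Indep, h0]
    exact M.M.empty_indep
  | succ k ih =>
    intro hk
    have hck := ih (by omega)
    obtain ⟨n, hn⟩ := hm.2
    obtain ⟨I, hIsub, hIind, hIcard⟩ := mrk_exists_indep M.M n
    have hIcard' : I.ncard = m := by rw [hIcard]; exact hn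
    have hIfin : I.Finite := (cliqueN_finite n).subset hIsub
    set J : Set (Sym2 ℕ) := (fun i : ℕ => s(2*i+n, 2*i+1+n)) '' Set.Iio k with hJ
    have hJge : ∀ e ∈ J, ∀ v ∈ e, n ≤ v := by
      rintro e ⟨i, hi, rfl⟩ v hv
      simp only [Sym2.mem_iff] at hv
      omega
    have hJM : IsMatching J := by
      rintro e ⟨i, hi, rfl⟩ f ⟨j, hj, rfl⟩ hne v hv1 hv2
      simp only [Sym2.mem_iff] at hv1 hv2
      have hij : i ≠ j := by rintro rfl; exact hne rfl
      omega
    have hJnd : ∀ e ∈ J, ¬ e.IsDiag := by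
      rintro e ⟨i, hi, rfl⟩
      simp [Sym2.mk_isDiag_iff]
    have hJfin : J.Finite := (Set.finite_Iio k).image _
    have hJcard : J.ncard = k := by
      rw [hJ, Set.ncard_image_of_injOn, Set.ncard_eq_toFinset_card']
      · simp
      · intro i _ j _ hij
        rw [Sym2.eq_iff] at hij
        omega
    have hJind : M.Indep J :=
      indep_transfer M (cmatch_matching k) (cmatch_nondiag k) (cmatch_finite k)
        hJM hJnd hJfin (by rw [cmatch_ncard, hJcard]) hck
    obtain ⟨f, hf, hins⟩ := Matroid.Indep.augment hJind hIind (by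
      rw [encard_eq_ncard' hJfin, encard_eq_ncard' hIfin, hJcard, hIcard']
      exact_mod_cast (by omega : k < m))
    obtain ⟨hfnd, hfv⟩ := hIsub hf.1
    have hinsM : IsMatching (insert f J) := by
      intro e1 h1 e2 h2 hne v hv1 hv2
      rcases Set.mem_insert_iff.1 h1 with rfl | h1' <;>
        rcases Set.mem_insert_iff.1 h2 with h2' | h2'
      · exact hne h2'.symm
      · have h3 := hJge _ h2' v hv2
        have h4 := hfv v hv1
        simp only [Set.mem_setOf_eq] at h4
        omega
      · rw [h2'] at hv2
        have h3 := hJge _ h1' v hv1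
        have h4 := hfv v hv2
        simp only [Set.mem_setOf_eq] at h4
        omega
      · exact hJM _ h1' _ h2' hne v hv1 hv2
    have hinsnd : ∀ e ∈ insert f J, ¬ e.IsDiag := by
      intro e h
      rcases Set.mem_insert_iff.1 h with rfl | h'
      · exact hfnd
      · exact hJnd _ h'
    have hinsfin : (insert f J).Finite := hJfin.insert f
    have hinscard : (insert f J).ncard = k + 1 := by
      rw [Set.ncard_insert_of_notMem hf.2 hJfin, hJcard]
    exact indep_transfer M hinsM hinsnd hinsfin (cmatch_matching (k+1)) (cmatch_nondiag (k+1))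
      (cmatch_finite (k+1)) (by rw [hinscard, cmatch_ncard]) hins

/-- If `M` is a bounded graph matroid family of rank `r(M) = m`, then
the graph consisting of `m + 1` pairwise disjoint (independent) edges is an `M`-circuit. -/
theorem matching_isCircuit (M : GraphMatroidFamily) (m : ℕ)
    (hb : M.Bounded) (hm : M.HasRank m) :
    ∀ E : Set (Sym2 ℕ), IsGraph E → IsMatching E → E.ncard = m + 1 →
      M.IsCircuit E := by
  intro E hG hMatch hcard
  refine ⟨hG, ?_, ?_⟩
  · intro hind
    have hcm : M.Indep (cmatch (m+1)) :=
      indep_transfer M hMatch hG.2 hG.1 (cmatch_matching (m+1)) (cmatch_nondiag (m+1))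
        (cmatch_finite (m+1)) (by rw [hcard, cmatch_ncard]) hind
    have hle : m + 1 ≤ mrk M.M (cliqueN (2*(m+1))) := by
      have h := le_mrk M.M (2*(m+1)) (cmatch (m+1)) (cmatch_subset_cliqueN (m+1)) hcm
      rwa [cmatch_ncard] at h
    have hub := hm.1 (2*(m+1))
    rw [GraphMatroidFamily.rk] at hub
    omega
  · intro e he
    have hfin' : (E \ {e}).Finite := hG.1.diff
    have hM' : IsMatching (E \ {e}) := fun e1 h1 e2 h2 => hMatch e1 h1.1 e2 h2.1
    have hnd' : ∀ f ∈ E \ {e}, ¬ f.IsDiag := fun f hf => hG.2 f hf.1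
    have hcard' : (E \ {e}).ncard = m := by
      rw [Set.ncard_diff_singleton_of_mem he, hcard]
      omega
    exact indep_transfer M (cmatch_matching m) (cmatch_nondiag m) (cmatch_finite m)
      hM' hnd' hfin' (by rw [hcard', cmatch_ncard]) (cmatch_indep M m hm m le_rfl)
end
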